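/- Let a > 0 and b > 0 with b < a, and define on [0, 2π/b] the function F₁(t) = cosh(t·c/2)·cos(b t/2) + (b/c)·sinh(t·c/2)·sin(b t/2), where c = √(a² − b²). Then F₁(0) = 1, F₁(2π/b) < 0, F₁ is strictly increasing on [0, π/b], strictly decreasing on [π/b, 2π/b], and has a unique root in (π/b, 2π/b). -/

import Mathlib

open Real Set

theorem F1_properties (a b : ℝ) (ha : 0 < a) (hb : 0 < b) (hba : b < a) :
    let c := Real.sqrt (a ^ 2 - b ^ 2)
    let F₁ := fun t : ℝ =>
      Real.cosh (t * c / 2) * Real.cos (b * t / 2) +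
        (b / c) * Real.sinh (t * c / 2) * Real.sin (b * t / 2)
    F₁ 0 = 1 ∧ F₁ (2 * Real.pi / b) < 0 ∧
    StrictMonoOn F₁ (Set.Icc 0 (Real.pi / b)) ∧
    StrictAntiOn F₁ (Set.Icc (Real.pi / b) (2 * Real.pi / b)) ∧
    ∃! t : ℝ, t ∈ Set.Ioo (Real.pi / b) (2 * Real.pi / b) ∧ F₁ t = 0 := by
  intro c F₁
  have hab : 0 < a ^ 2 - b ^ 2 := by nlinarith
  have hc : 0 < c := Real.sqrt_pos.mpr hab
  have hc2 : c ^ 2 = a ^ 2 - b ^ 2 := Real.sq_sqrt hab.le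
  have hb' : b ≠ 0 := hb.ne'
  have hc' : c ≠ 0 := hc.ne'
  have hcont : Continuous F₁ := by fun_prop
  have hderiv : ∀ t, HasDerivAt F₁
      (a ^ 2 / (2 * c) * (Real.sinh (t * c / 2) * Real.cos (b * t / 2))) t := by
    intro t
    have h1 : HasDerivAt (fun t : ℝ => t * c / 2) (c / 2) t := by
      simpa using ((hasDerivAt_id t).mul_const c).div_const 2
    have h2 : HasDerivAt (fun t : ℝ => b * t / 2) (b / 2) t := by
      simpa using ((hasDerivAt_id t).const_mul b).div_const 2
    have hF := ((h1.cosh.mul h2.cos).add (((h1.sinh).const_mul (b / c)).mul h2.sin))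
    refine hF.congr_deriv ?_
    have hb2 : a ^ 2 = b ^ 2 + c ^ 2 := by linarith
    rw [hb2]; field_simp; ring
  have hF0 : F₁ 0 = 1 := by simp [F₁]
  have hx2 : b * (2 * Real.pi / b) / 2 = Real.pi := by field_simp
  have hx1 : b * (Real.pi / b) / 2 = Real.pi / 2 := by field_simp
  have hFB : F₁ (2 * Real.pi / b) < 0 := by
    simp only [F₁, hx2, Real.cos_pi, Real.sin_pi]
    simp
    positivity
  have hFA : 0 < F₁ (Real.pi / b) := by
    simp only [F₁, hx1, Real.cos_pi_div_two, Real.sin_pi_div_two]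
    have h1 : 0 < Real.pi / b * c / 2 := by positivity
    have := Real.sinh_pos_iff.mpr h1
    simp
    positivity
  have hAB : Real.pi / b < 2 * Real.pi / b :=
    (div_lt_div_iff_of_pos_right hb).mpr (by linarith [Real.pi_pos])
  have hA0 : 0 < Real.pi / b := by positivity
  have hmono : StrictMonoOn F₁ (Set.Icc 0 (Real.pi / b)) := by
    apply strictMonoOn_of_deriv_pos (convex_Icc _ _) hcont.continuousOn
    intro x hx
    rw [interior_Icc] at hx
    rw [(hderiv x).deriv]
    have hs : 0 < Real.sinh (x * c / 2) := Real.sinh_pos_iff.mpr (by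
      have := hx.1; positivity)
    have hcos : 0 < Real.cos (b * x / 2) := by
      apply Real.cos_pos_of_mem_Ioo
      constructor
      · nlinarith [Real.pi_pos, hx.1]
      · have : b * x < Real.pi := by
          have := hx.2
          calc b * x < b * (Real.pi / b) := by nlinarith [hx.1]
          _ = Real.pi := by field_simp
        linarith
    positivity
  have hanti : StrictAntiOn F₁ (Set.Icc (Real.pi / b) (2 * Real.pi / b)) := by
    apply strictAntiOn_of_deriv_neg (convex_Icc _ _) hcont.continuousOn
    intro x hx
    rw [interior_Icc] at hx
    rw [(hderiv x).deriv]
    have hxpos : 0 < x := lt_trans hA0 hx.1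
    have hs : 0 < Real.sinh (x * c / 2) := Real.sinh_pos_iff.mpr (by positivity)
    have hlo : Real.pi < b * x := by
      calc Real.pi = b * (Real.pi / b) := by field_simp
      _ < b * x := by nlinarith [hx.1, Real.pi_pos]
    have hhi : b * x < 2 * Real.pi := by
      calc b * x < b * (2 * Real.pi / b) := by nlinarith [hx.2]
      _ = 2 * Real.pi := by field_simp
    have hcos : Real.cos (b * x / 2) < 0 :=
      Real.cos_neg_of_pi_div_two_lt_of_lt (by linarith) (by nlinarith [Real.pi_pos])
    have h1 : 0 < a ^ 2 / (2 * c) := by positivity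
    exact mul_neg_of_pos_of_neg h1 (mul_neg_of_pos_of_neg hs hcos)
  refine ⟨hF0, hFB, hmono, hanti, ?_⟩
  have hiv := intermediate_value_Ioo' hAB.le hcont.continuousOn
  have h0 : (0 : ℝ) ∈ Set.Ioo (F₁ (2 * Real.pi / b)) (F₁ (Real.pi / b)) := ⟨hFB, hFA⟩
  obtain ⟨t, ht, htz⟩ := hiv h0
  refine ⟨t, ⟨ht, htz⟩, ?_⟩
  rintro s ⟨hs, hsz⟩
  have := hanti.injOn (Set.mem_Icc_of_Ioo hs) (Set.mem_Icc_of_Ioo ht) (by rw [hsz, htz])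
  exact this
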